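/- The set of unitary operators on M of the form I + A, where A is a finite-rank operator, is dense in the group of all unitary operators on M equipped with the strong operator topology. -/

import Mathlib

/-!
Common setup: unitary representations of a (free) group on complex Hilbert spaces,
the group-algebra extension of a representation, irreducibility, the left regular
representation on `ℓ²(G)` and temperedness, abstract Hilbert-space tensor products
of representations, and the space of representations of a free group with the
topology of strong operator convergence on the generators.
-/

noncomputable section

open scoped InnerProductSpace ENNReal

/-- A unitary representation of the group `G` on the complex Hilbert space `K`. -/
abbrev URep (G K : Type) [Group G] [NormedAddCommGroup K] [InnerProductSpace ℂ K]
    [CompleteSpace K] : Type :=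
  G →* unitary (K →L[ℂ] K)

/-- The canonical extension of a unitary representation to an algebra homomorphism from
the group algebra `ℂ[G]` to the algebra of bounded operators on `K`. -/
noncomputable def algRep {G K : Type} [Group G] [NormedAddCommGroup K]
    [InnerProductSpace ℂ K] [CompleteSpace K] (σ : URep G K) :
    MonoidAlgebra ℂ G →ₐ[ℂ] (K →L[ℂ] K) :=
  MonoidAlgebra.lift ℂ (K →L[ℂ] K) G ((unitary (K →L[ℂ] K)).subtype.comp σ)

/-- Irreducibility of a unitary representation: the only closed invariant subspaces are
`⊥` and `⊤`. -/
def IsIrreducibleRep {G K : Type} [Group G] [NormedAddCommGroup K]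
    [InnerProductSpace ℂ K] [CompleteSpace K] (σ : URep G K) : Prop :=
  ∀ V : Submodule ℂ K, IsClosed (V : Set K) →
    (∀ g : G, ∀ v ∈ V, ((σ g : K →L[ℂ] K) v) ∈ V) → V = ⊥ ∨ V = ⊤

section Regular

variable {α β : Type} (e : α ≃ β)

private lemma memℓp_comp_equiv {f : β → ℂ} (hf : Memℓp f 2) :
    Memℓp (fun a => f (e a)) 2 := by
  have h2 : 0 < (2 : ℝ≥0∞).toReal := by norm_num
  rw [memℓp_gen_iff h2] at hf ⊢
  exact (e.summable_iff (f := fun b => ‖f b‖ ^ (2 : ℝ≥0∞).toReal)).2 hf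

private def lpCongrAuxₗ : lp (fun _ : β => ℂ) 2 →ₗ[ℂ] lp (fun _ : α => ℂ) 2 where
  toFun f := ⟨fun a => f (e a), memℓp_comp_equiv e (lp.memℓp f)⟩
  map_add' f g := by ext a; simp [lp.coeFn_add]; rfl
  map_smul' c f := by ext a; simp [lp.coeFn_smul]

/-- Reindexing of `ℓ²` along an equivalence of the index sets, as a linear isometric
equivalence. -/
def lpCongr : lp (fun _ : α => ℂ) 2 ≃ₗᵢ[ℂ] lp (fun _ : β => ℂ) 2 where
  toLinearEquiv := LinearEquiv.ofLinear (lpCongrAuxₗ e.symm) (lpCongrAuxₗ e)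
    (by ext f b; simp [lpCongrAuxₗ]) (by ext f a; simp [lpCongrAuxₗ])
  norm_map' f := by
    have h2 : 0 < (2 : ℝ≥0∞).toReal := by norm_num
    rw [lp.norm_eq_tsum_rpow h2, lp.norm_eq_tsum_rpow h2]
    congr 1
    exact e.symm.tsum_eq (fun a => ‖f a‖ ^ (2 : ℝ≥0∞).toReal) |>.symm ▸ rfl

@[simp] private lemma lpCongr_apply (f : lp (fun _ : α => ℂ) 2) (b : β) :
    (lpCongr e f : ∀ _ : β, ℂ) b = f (e.symm b) := rfl

private lemma lpCongr_trans {γ : Type} (e e' : γ ≃ γ) :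
    lpCongr (e.trans e') = lpCongr e' * lpCongr e := by
  apply LinearIsometryEquiv.ext
  intro f
  apply lp.ext
  funext c
  rfl

/-- Left translations on `ℓ²(G)`, as a homomorphism into the group of linear isometric
equivalences. -/
def lpTranslations (G : Type) [Group G] :
    G →* (lp (fun _ : G => ℂ) 2 ≃ₗᵢ[ℂ] lp (fun _ : G => ℂ) 2) where
  toFun g := lpCongr (Equiv.mulLeft g)
  map_one' := by
    apply LinearIsometryEquiv.ext
    intro f
    apply lp.ext
    funext x
    simp [Equiv.Perm.one_symm]
  map_mul' g h := by
    have key : Equiv.mulLeft (g * h) = (Equiv.mulLeft h).trans (Equiv.mulLeft g) := by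
      ext x; simp [mul_assoc]
    rw [key, lpCongr_trans]

end Regular

/-- The left regular representation of `G` on `ℓ²(G)`. -/
noncomputable def leftRegular (G : Type) [Group G] : URep G (lp (fun _ : G => ℂ) 2) :=
  (Unitary.linearIsometryEquiv.symm.toMonoidHom).comp (lpTranslations G)

/-- A unitary representation `σ` is *tempered* (weakly contained in the regular
representation) if `‖σ(f)‖ ≤ ‖λ(f)‖` for every element `f` of the group algebra. -/
def IsTempered {G K : Type} [Group G] [NormedAddCommGroup K]
    [InnerProductSpace ℂ K] [CompleteSpace K] (σ : URep G K) : Prop :=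
  ∀ f : MonoidAlgebra ℂ G, ‖algRep σ f‖ ≤ ‖algRep (leftRegular G) f‖

/-- `ρ` realizes the Hilbert-space tensor product `η ⊗ π` on `E`: the bilinear map
`tmul : H → M → E` has dense span, satisfies `⟪a⊗b, c⊗d⟫ = ⟪a,c⟫·⟪b,d⟫`, and
`ρ(g)(a⊗b) = η(g)a ⊗ π(g)b` for all `g`. -/
def IsTensorRep {G H M E : Type} [Group G]
    [NormedAddCommGroup H] [InnerProductSpace ℂ H] [CompleteSpace H]
    [NormedAddCommGroup M] [InnerProductSpace ℂ M] [CompleteSpace M]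
    [NormedAddCommGroup E] [InnerProductSpace ℂ E] [CompleteSpace E]
    (η : URep G H) (π : URep G M)
    (tmul : H →ₗ[ℂ] M →ₗ[ℂ] E) (ρ : URep G E) : Prop :=
  (∀ (a c : H) (b d : M), ⟪tmul a b, tmul c d⟫_ℂ = ⟪a, c⟫_ℂ * ⟪b, d⟫_ℂ)
  ∧ Dense (↑(Submodule.span ℂ {z : E | ∃ a b, z = tmul a b}) : Set E)
  ∧ ∀ (g : G) (a : H) (b : M),
      (ρ g : E →L[ℂ] E) (tmul a b) = tmul ((η g : H →L[ℂ] H) a) ((π g : M →L[ℂ] M) b)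

/-- `η` tensored with any irreducible finite-dimensional unitary representation is
irreducible. -/
def TensorFDIrred {G H : Type} [Group G] [NormedAddCommGroup H] [InnerProductSpace ℂ H]
    [CompleteSpace H] (η : URep G H) : Prop :=
  ∀ (N : Type) [NormedAddCommGroup N] [InnerProductSpace ℂ N] [FiniteDimensional ℂ N],
    ∀ π : URep G N, IsIrreducibleRep π →
      ∀ (E : Type) [NormedAddCommGroup E] [InnerProductSpace ℂ E] [CompleteSpace E],
        ∀ (tmul : H →ₗ[ℂ] N →ₗ[ℂ] E) (ρ : URep G E),
          IsTensorRep η π tmul ρ → IsIrreducibleRep ρ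

/-- The space of unitary representations of the free group on `S` on the Hilbert
space `M`, identified with `S`-tuples of unitary operators via evaluation at the
generators. -/
abbrev RepSpace (S M : Type) [NormedAddCommGroup M] [InnerProductSpace ℂ M]
    [CompleteSpace M] : Type :=
  URep (FreeGroup S) M

/-- The topology on `RepSpace S M`: the product over the generators of the strong
operator topology (the topology of pointwise norm-convergence). -/
instance repSpaceTopology (S M : Type) [NormedAddCommGroup M] [InnerProductSpace ℂ M]
    [CompleteSpace M] : TopologicalSpace (RepSpace S M) :=
  TopologicalSpace.induced
    (fun (π : RepSpace S M) => fun (s : S) (v : M) => (π (FreeGroup.of s) : M →L[ℂ] M) v)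
    inferInstance

/-- The set of representations `π` of the free group on `M` such that the tensor
product `η ⊗ π` is irreducible (on any realization of the Hilbert tensor product). -/
def IrrTensorReps {S H M : Type}
    [NormedAddCommGroup H] [InnerProductSpace ℂ H] [CompleteSpace H]
    [NormedAddCommGroup M] [InnerProductSpace ℂ M] [CompleteSpace M]
    (η : URep (FreeGroup S) H) : Set (RepSpace S M) :=
  {π | ∀ (E : Type) [NormedAddCommGroup E] [InnerProductSpace ℂ E] [CompleteSpace E],
        ∀ (tmul : H →ₗ[ℂ] M →ₗ[ℂ] E) (ρ : URep (FreeGroup S) E),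
          IsTensorRep η π tmul ρ → IsIrreducibleRep ρ}

/-- The unitary group of `M`, as a type, to be regarded with the strong operator
topology. -/
def UnitarySOT (M : Type) [NormedAddCommGroup M] [InnerProductSpace ℂ M]
    [CompleteSpace M] : Type :=
  unitary (M →L[ℂ] M)

/-- The underlying bounded operator of an element of `UnitarySOT M`. -/
def UnitarySOT.toCLM {M : Type} [NormedAddCommGroup M] [InnerProductSpace ℂ M]
    [CompleteSpace M] (U : UnitarySOT M) : M →L[ℂ] M :=
  (show unitary (M →L[ℂ] M) from U).1

/-- The strong operator topology on the unitary group: the topology of pointwise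
norm-convergence. -/
instance unitarySOTTopology (M : Type) [NormedAddCommGroup M] [InnerProductSpace ℂ M]
    [CompleteSpace M] : TopologicalSpace (UnitarySOT M) :=
  TopologicalSpace.induced (fun (U : UnitarySOT M) (v : M) => U.toCLM v) inferInstance

namespace FiniteRankDenseAux

variable {M : Type} [NormedAddCommGroup M] [InnerProductSpace ℂ M] [CompleteSpace M]

private lemma inner_sum_orth {n : ℕ} {e : Fin n → M} (he : Orthonormal ℂ e)
    (x u : M) (hu : u ∈ Submodule.span ℂ (Set.range e)) :
    ⟪u, x - ∑ j, ⟪e j, x⟫_ℂ • e j⟫_ℂ = 0 := by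
  induction hu using Submodule.span_induction with
  | mem u hu =>
      obtain ⟨i, rfl⟩ := hu
      rw [inner_sub_right, he.inner_right_fintype, sub_self]
  | zero => simp
  | add u v _ _ h1 h2 => rw [inner_add_left, h1, h2, add_zero]
  | smul c u _ h => rw [inner_smul_left, h, mul_zero]

private lemma inner_proj {n : ℕ} {e : Fin n → M} (he : Orthonormal ℂ e)
    (x u : M) (hu : u ∈ Submodule.span ℂ (Set.range e)) :
    ⟪u, ∑ j, ⟪e j, x⟫_ℂ • e j⟫_ℂ = ⟪u, x⟫_ℂ := by
  have h := inner_sum_orth he x u hu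
  rw [inner_sub_right, sub_eq_zero] at h
  exact h.symm

private lemma sum_smul_sub {n : ℕ} (e f : Fin n → M) (l : Fin n → ℂ) :
    ∑ j, l j • (f j - e j) = (∑ j, l j • f j) - ∑ j, l j • e j := by
  rw [← Finset.sum_sub_distrib]
  exact Finset.sum_congr rfl fun j _ => smul_sub _ _ _

private lemma coef_aux {n : ℕ} {e f : Fin n → M} (he : Orthonormal ℂ e)
    (hf : Orthonormal ℂ f)
    (hfe : ∀ i, f i ∈ Submodule.span ℂ (Set.range e)) (x : M) (i : Fin n) :
    ⟪f i, x + ∑ j, ⟪e j, x⟫_ℂ • (f j - e j)⟫_ℂ = ⟪e i, x⟫_ℂ := by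
  rw [inner_add_right, sum_smul_sub, inner_sub_right, hf.inner_right_fintype,
    inner_proj he x (f i) (hfe i)]
  ring

private lemma inner_T_aux {n : ℕ} {e f : Fin n → M} (he : Orthonormal ℂ e)
    (hf : Orthonormal ℂ f)
    (hfe : ∀ i, f i ∈ Submodule.span ℂ (Set.range e)) (x y : M) :
    ⟪x + ∑ j, ⟪e j, x⟫_ℂ • (f j - e j), y + ∑ j, ⟪e j, y⟫_ℂ • (f j - e j)⟫_ℂ
      = ⟪x, y⟫_ℂ := by
  have key : ∀ z : M, z + ∑ j, ⟪e j, z⟫_ℂ • (f j - e j)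
      = (z - ∑ j, ⟪e j, z⟫_ℂ • e j) + ∑ j, ⟪e j, z⟫_ℂ • f j := by
    intro z
    rw [sum_smul_sub]
    abel
  have hmemS : ∀ z : M,
      (∑ j, ⟪e j, z⟫_ℂ • f j) ∈ Submodule.span ℂ (Set.range e) := fun z =>
    Submodule.sum_mem _ fun j _ => Submodule.smul_mem _ _ (hfe j)
  have hmemP : ∀ z : M,
      (∑ j, ⟪e j, z⟫_ℂ • e j) ∈ Submodule.span ℂ (Set.range e) := fun z =>
    Submodule.sum_mem _ fun j _ =>
      Submodule.smul_mem _ _ (Submodule.subset_span ⟨j, rfl⟩)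
  have h1 : ⟪(∑ j, ⟪e j, x⟫_ℂ • f j), y - ∑ j, ⟪e j, y⟫_ℂ • e j⟫_ℂ = 0 :=
    inner_sum_orth he y _ (hmemS x)
  have h2 : ⟪x - ∑ j, ⟪e j, x⟫_ℂ • e j, (∑ j, ⟪e j, y⟫_ℂ • f j)⟫_ℂ = 0 :=
    inner_eq_zero_symm.mp (inner_sum_orth he x _ (hmemS y))
  have h3 : ⟪(∑ j, ⟪e j, x⟫_ℂ • e j), y - ∑ j, ⟪e j, y⟫_ℂ • e j⟫_ℂ = 0 :=
    inner_sum_orth he y _ (hmemP x)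
  have h4 : ⟪x - ∑ j, ⟪e j, x⟫_ℂ • e j, (∑ j, ⟪e j, y⟫_ℂ • e j)⟫_ℂ = 0 :=
    inner_eq_zero_symm.mp (inner_sum_orth he x _ (hmemP y))
  have h5 := Orthonormal.inner_sum hf (fun j => ⟪e j, x⟫_ℂ)
    (fun j => ⟪e j, y⟫_ℂ) Finset.univ
  have h6 := Orthonormal.inner_sum he (fun j => ⟪e j, x⟫_ℂ)
    (fun j => ⟪e j, y⟫_ℂ) Finset.univ
  have hx : x = (x - ∑ j, ⟪e j, x⟫_ℂ • e j) + ∑ j, ⟪e j, x⟫_ℂ • e j := by abel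
  have hy : y = (y - ∑ j, ⟪e j, y⟫_ℂ • e j) + ∑ j, ⟪e j, y⟫_ℂ • e j := by abel
  rw [key x, key y, inner_add_left, inner_add_right, inner_add_right, h1, h2, h5]
  conv_rhs => rw [hx, hy]
  rw [inner_add_left, inner_add_right, inner_add_right, h3, h4, h6]

private lemma exists_unitary {n : ℕ} (e f : Fin n → M)
    (he : Orthonormal ℂ e) (hf : Orthonormal ℂ f)
    (hfe : ∀ i, f i ∈ Submodule.span ℂ (Set.range e))
    (hef : ∀ i, e i ∈ Submodule.span ℂ (Set.range f)) :
    ∃ V : UnitarySOT M,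
      V.toCLM = 1 + ∑ i, (innerSL ℂ (e i)).smulRight (f i - e i) ∧
      ∀ i, V.toCLM (e i) = f i := by
  set A : M →L[ℂ] M := ∑ i, (innerSL ℂ (e i)).smulRight (f i - e i) with hA
  set A' : M →L[ℂ] M := ∑ i, (innerSL ℂ (f i)).smulRight (e i - f i) with hA'
  have hAx : ∀ x, (1 + A) x = x + ∑ j, ⟪e j, x⟫_ℂ • (f j - e j) := by
    intro x
    simp [hA, ContinuousLinearMap.sum_apply]
  have hA'x : ∀ x, (1 + A') x = x + ∑ j, ⟪f j, x⟫_ℂ • (e j - f j) := by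
    intro x
    simp [hA', ContinuousLinearMap.sum_apply]
  have hcancel : ∀ (g h : Fin n → M) (l : Fin n → ℂ),
      ∑ j, l j • (g j - h j) + ∑ j, l j • (h j - g j) = 0 := by
    intro g h l
    rw [← Finset.sum_add_distrib]
    apply Finset.sum_eq_zero
    intro j _
    rw [← smul_add]
    simp
  have hinv1 : ∀ x, (1 + A') ((1 + A) x) = x := by
    intro x
    rw [hAx, hA'x]
    have hc : ∀ i, ⟪f i, x + ∑ j, ⟪e j, x⟫_ℂ • (f j - e j)⟫_ℂ = ⟪e i, x⟫_ℂ :=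
      coef_aux he hf hfe x
    simp only [hc]
    rw [add_assoc, hcancel f e (fun j => ⟪e j, x⟫_ℂ), add_zero]
  have hinv2 : ∀ x, (1 + A) ((1 + A') x) = x := by
    intro x
    rw [hA'x, hAx]
    have hc : ∀ i, ⟪e i, x + ∑ j, ⟪f j, x⟫_ℂ • (e j - f j)⟫_ℂ = ⟪f i, x⟫_ℂ :=
      coef_aux hf he hef x
    simp only [hc]
    rw [add_assoc, hcancel e f (fun j => ⟪f j, x⟫_ℂ), add_zero]
  have hnorm : ∀ x, ‖(1 + A) x‖ = ‖x‖ := by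
    intro x
    have h2 : ⟪(1 + A) x, (1 + A) x⟫_ℂ = ⟪x, x⟫_ℂ := by
      rw [hAx]
      exact inner_T_aux he hf hfe x x
    rw [@norm_eq_sqrt_re_inner ℂ _ _ _ _ ((1 + A) x), @norm_eq_sqrt_re_inner ℂ _ _ _ _ x, h2]
  let W : M ≃ₗᵢ[ℂ] M :=
    { LinearEquiv.ofLinear (re₁₂ := RingHomInvPair.ids) (re₂₁ := RingHomInvPair.ids) ((1 + A : M →L[ℂ] M) : M →ₗ[ℂ] M)
        ((1 + A' : M →L[ℂ] M) : M →ₗ[ℂ] M)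
        (by ext x; simpa using hinv2 x) (by ext x; simpa using hinv1 x) with
      norm_map' := hnorm }
  set V₀ : UnitarySOT M := Unitary.linearIsometryEquiv.symm W with hV₀
  refine ⟨V₀, ?_, ?_⟩
  · ext x
    rfl
  · intro i
    have hco : (V₀.toCLM : M → M) (e i) = (1 + A) (e i) := rfl
    show (V₀.toCLM : M → M) (e i) = f i
    rw [hco, hAx]
    have hsum : ∑ j, ⟪e j, e i⟫_ℂ • (f j - e j) = f i - e i := by
      rw [Finset.sum_eq_single i]
      · rw [orthonormal_iff_ite.mp he i i, if_pos rfl, one_smul]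
      · intro j _ hj
        rw [orthonormal_iff_ite.mp he j i, if_neg hj, zero_smul]
      · intro h
        exact absurd (Finset.mem_univ i) h
    rw [hsum]
    abel

private lemma orthonormal_restrict_of_eq {n k : ℕ} {F : Submodule ℂ M}
    (g : Fin k → M) (hg : Orthonormal ℂ g) (v : Fin n → F)
    (hv : ∀ (i : Fin n) (h : (i : ℕ) < k), (v i : M) = g ⟨i, h⟩) :
    Orthonormal ℂ (Set.restrict {i : Fin n | (i : ℕ) < k} v) := by
  rw [orthonormal_iff_ite] at hg ⊢
  rintro ⟨i, hi⟩ ⟨j, hj⟩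
  have hij : ⟪v i, v j⟫_ℂ = ⟪g ⟨i, hi⟩, g ⟨j, hj⟩⟫_ℂ := by
    rw [Submodule.coe_inner, hv i hi, hv j hj]
  change ⟪v i, v j⟫_ℂ = _
  rw [hij, hg]
  have hiff : ((⟨(i : ℕ), hi⟩ : Fin k) = ⟨(j : ℕ), hj⟩)
      ↔ ((⟨i, hi⟩ : {i : Fin n | (i : ℕ) < k}) = ⟨j, hj⟩) := by
    constructor
    · intro h
      exact Subtype.ext (Fin.ext (Fin.mk_eq_mk.mp h))
    · intro h
      exact Fin.mk_eq_mk.mpr (congrArg Fin.val (Subtype.mk_eq_mk.mp h))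
  simp only [hiff]

private lemma orthonormal_coe {F : Submodule ℂ M} {ι : Type} (v : ι → F)
    (hv : Orthonormal ℂ v) : Orthonormal ℂ (fun i => (v i : M)) := by
  classical
  rw [orthonormal_iff_ite] at hv ⊢
  intro i j
  rw [← Submodule.coe_inner, hv]

private lemma span_coe_onb {F : Submodule ℂ M} {ι : Type} [Fintype ι]
    (b : OrthonormalBasis ι ℂ F) :
    Submodule.span ℂ (Set.range (fun i => (b i : M))) = F := by
  have himg : Set.range (fun i => (b i : M)) = F.subtype '' Set.range ⇑b := by
    ext z
    constructor
    · rintro ⟨i, rfl⟩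
      exact ⟨b i, ⟨i, rfl⟩, rfl⟩
    · rintro ⟨w, ⟨i, rfl⟩, rfl⟩
      exact ⟨i, rfl⟩
  rw [himg, Submodule.span_image, ← OrthonormalBasis.coe_toBasis b, Module.Basis.span_eq,
    Submodule.map_subtype_top]

private lemma key (U : UnitarySOT M) (t : Finset M) :
    ∃ V : UnitarySOT M,
      (∃ A : M →L[ℂ] M, FiniteDimensional ℂ (LinearMap.range (A : M →ₗ[ℂ] M)) ∧
        V.toCLM = 1 + A) ∧ ∀ w ∈ t, V.toCLM w = U.toCLM w := by
  classical
  set E : Submodule ℂ M := Submodule.span ℂ (t : Set M) with hE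
  haveI : FiniteDimensional ℂ E := FiniteDimensional.span_of_finite ℂ t.finite_toSet
  set F : Submodule ℂ M := E ⊔ Submodule.map (U.toCLM : M →ₗ[ℂ] M) E with hF
  haveI : FiniteDimensional ℂ F := by
    apply Submodule.finiteDimensional_sup
  have hEF : E ≤ F := le_sup_left
  have hkn : Module.finrank ℂ E ≤ Module.finrank ℂ F := Submodule.finrank_mono hEF
  set k := Module.finrank ℂ E with hk
  set n := Module.finrank ℂ F with hn
  let b := stdOrthonormalBasis ℂ E
  let g : Fin k → M := fun j => (b j : M)
  have hg : Orthonormal ℂ g := orthonormal_coe _ b.orthonormal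
  have hgE : ∀ j, g j ∈ E := fun j => (b j).2
  have hUg : Orthonormal ℂ (fun j => U.toCLM (g j)) := by
    rw [orthonormal_iff_ite] at hg ⊢
    intro i j
    rw [← hg i j]
    exact Unitary.inner_map_map (show unitary (M →L[ℂ] M) from U) (g i) (g j)
  have hUgF : ∀ j, U.toCLM (g j) ∈ F :=
    fun j => Submodule.mem_sup_right (Submodule.mem_map_of_mem (hgE j))
  have hcard : Module.finrank ℂ F = Fintype.card (Fin n) := by
    rw [Fintype.card_fin]
  -- the `e`-family
  let v : Fin n → F := fun i =>
    if h : (i : ℕ) < k then ⟨g ⟨i, h⟩, hEF (hgE ⟨i, h⟩)⟩ else 0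
  have hv : ∀ (i : Fin n) (h : (i : ℕ) < k), (v i : M) = g ⟨i, h⟩ := by
    intro i h
    simp only [v, dif_pos h]
  obtain ⟨bE, hbE⟩ := Orthonormal.exists_orthonormalBasis_extension_of_card_eq
    (𝕜 := ℂ) hcard (orthonormal_restrict_of_eq g hg v hv)
  -- the `f`-family
  let w : Fin n → F := fun i =>
    if h : (i : ℕ) < k then ⟨U.toCLM (g ⟨i, h⟩), hUgF ⟨i, h⟩⟩ else 0
  have hw : ∀ (i : Fin n) (h : (i : ℕ) < k), (w i : M) = U.toCLM (g ⟨i, h⟩) := by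
    intro i h
    simp only [w, dif_pos h]
  obtain ⟨bF, hbF⟩ := Orthonormal.exists_orthonormalBasis_extension_of_card_eq
    (𝕜 := ℂ) hcard (orthonormal_restrict_of_eq _ hUg w hw)
  let e : Fin n → M := fun i => (bE i : M)
  let f : Fin n → M := fun i => (bF i : M)
  have he : Orthonormal ℂ e := orthonormal_coe _ bE.orthonormal
  have hf : Orthonormal ℂ f := orthonormal_coe _ bF.orthonormal
  have hspanE : Submodule.span ℂ (Set.range e) = F := span_coe_onb bE
  have hspanF : Submodule.span ℂ (Set.range f) = F := span_coe_onb bF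
  have hfe : ∀ i, f i ∈ Submodule.span ℂ (Set.range e) := by
    intro i
    rw [hspanE]
    exact (bF i).2
  have hef : ∀ i, e i ∈ Submodule.span ℂ (Set.range f) := by
    intro i
    rw [hspanF]
    exact (bE i).2
  obtain ⟨V, hVform, hVe⟩ := exists_unitary e f he hf hfe hef
  have hagree : ∀ j : Fin k, V.toCLM (g j) = U.toCLM (g j) := by
    intro j
    have hjn : (j : ℕ) < n := lt_of_lt_of_le j.2 hkn
    set i : Fin n := ⟨(j : ℕ), hjn⟩ with hi
    have his : i ∈ {i : Fin n | (i : ℕ) < k} := j.2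
    have he_i : e i = g j := by
      show (bE i : M) = g j
      rw [hbE i his, hv i j.2]
    have hf_i : f i = U.toCLM (g j) := by
      show (bF i : M) = U.toCLM (g j)
      rw [hbF i his, hw i j.2]
    rw [← hf_i, ← he_i]
    exact hVe i
  refine ⟨V, ⟨∑ i, (innerSL ℂ (e i)).smulRight (f i - e i), ?_, hVform⟩, ?_⟩
  · have hle : LinearMap.range
        ((∑ i, (innerSL ℂ (e i)).smulRight (f i - e i) : M →L[ℂ] M) : M →ₗ[ℂ] M)
        ≤ Submodule.span ℂ (Set.range fun i => f i - e i) := by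
      rintro y ⟨x, rfl⟩
      simp only [ContinuousLinearMap.coe_coe, ContinuousLinearMap.sum_apply,
        ContinuousLinearMap.smulRight_apply, innerSL_apply_apply]
      exact Submodule.sum_mem _ fun i _ =>
        Submodule.smul_mem _ _ (Submodule.subset_span ⟨i, rfl⟩)
    haveI : FiniteDimensional ℂ
        (Submodule.span ℂ (Set.range fun i => f i - e i)) :=
      FiniteDimensional.span_of_finite ℂ (Set.finite_range _)
    exact Submodule.finiteDimensional_of_le hle
  · intro z hz
    have hzE : z ∈ Submodule.span ℂ (Set.range g) := by
      rw [span_coe_onb b]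
      exact Submodule.subset_span hz
    clear hz
    induction hzE using Submodule.span_induction with
    | mem x hx =>
        obtain ⟨j, rfl⟩ := hx
        exact hagree j
    | zero => rw [map_zero, map_zero]
    | add x y _ _ h1 h2 => rw [map_add, map_add, h1, h2]
    | smul c x _ h => rw [map_smul, map_smul, h]

end FiniteRankDenseAux

/-- **Lemma.**  Unitary operators of the form `I + A` with `A` of finite rank are dense
in the unitary group of `M` with the strong operator topology. -/
theorem finite_rank_perturbations_dense
    (M : Type) [NormedAddCommGroup M] [InnerProductSpace ℂ M] [CompleteSpace M]
    [TopologicalSpace.SeparableSpace M] (hM : ¬ FiniteDimensional ℂ M) :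
    Dense {U : UnitarySOT M | ∃ A : M →L[ℂ] M,
      FiniteDimensional ℂ (LinearMap.range (A : M →ₗ[ℂ] M)) ∧
        U.toCLM = 1 + A} := by
  rw [dense_iff_inter_open]
  intro O hO hne
  obtain ⟨O', hO', rfl⟩ := isOpen_induced_iff.mp hO
  obtain ⟨U, hU⟩ := hne
  obtain ⟨I, u, hu, hsub⟩ := isOpen_pi_iff.mp hO' _ hU
  obtain ⟨V, hV1, hV2⟩ := FiniteRankDenseAux.key U I
  refine ⟨V, ?_, hV1⟩
  show (fun v : M => V.toCLM v) ∈ O'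
  apply hsub
  intro v hv
  simp only
  rw [hV2 v hv]
  exact (hu v hv).2
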